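/- Let S be a Steiner triple system of order 25 with a colouring whose colour classes A, B, C have cardinalities |A| = 11, |B| = 7 and |C| = 7. Then S contains a block with two points in B and one point in A, or a block with two points in C and one point in A. (If all 21 pairs within B lay in blocks with third point in C and all 21 pairs within C lay in blocks with third point in B, these blocks would use 84 pairs with one point in B and one in C, whereas only 49 such pairs exist.) -/
import Mathlib


/-- A Steiner triple system on point set `points` with block set `blocks`:
every block is a 3-element subset of `points`, and every pair of distinct
points lies in exactly one block. -/
def IsSTS {α : Type*} [DecidableEq α] (points : Finset α) (blocks : Finset (Finset α)) : Prop :=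
  (∀ b ∈ blocks, b ⊆ points ∧ b.card = 3) ∧
  (∀ x ∈ points, ∀ y ∈ points, x ≠ y → ∃! b, b ∈ blocks ∧ x ∈ b ∧ y ∈ b)

/-- An `ℓ`-good sequencing: a permutation (listing) of the points such that no
`ℓ` consecutive entries contain a block. -/
def IsGoodSeq {α : Type*} [DecidableEq α] (points : Finset α) (blocks : Finset (Finset α))
    (ℓ : ℕ) (L : List α) : Prop :=
  L.Nodup ∧ L.toFinset = points ∧
  ∀ i : ℕ, ∀ b ∈ blocks, ¬ b ⊆ ((L.drop i).take ℓ).toFinset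

/-- A cyclic `ℓ`-good sequencing: a permutation (listing) of the points such that no
`ℓ` cyclically consecutive entries contain a block. -/
def IsCyclicGoodSeq {α : Type*} [DecidableEq α] (points : Finset α) (blocks : Finset (Finset α))
    (ℓ : ℕ) (L : List α) : Prop :=
  L.Nodup ∧ L.toFinset = points ∧
  ∀ i : ℕ, ∀ b ∈ blocks, ¬ b ⊆ (((L ++ L).drop i).take ℓ).toFinset

/-- An independent set: a set of points containing no block. -/
def IsIndep {α : Type*} [DecidableEq α] (blocks : Finset (Finset α)) (I : Finset α) : Prop :=
  ∀ b ∈ blocks, ¬ b ⊆ I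

/-- A (proper) colouring with colour set `Fin k`: no block is monochromatic,
i.e. every colour class is an independent set. -/
def IsColouring {α : Type*} [DecidableEq α] (blocks : Finset (Finset α)) {k : ℕ}
    (χ : α → Fin k) : Prop :=
  ∀ b ∈ blocks, ∃ x ∈ b, ∃ y ∈ b, χ x ≠ χ y

/-- A colouring with three explicitly given colour classes `A`, `B`, `C`:
they partition the point set and each is independent. -/
def IsColouring3 {α : Type*} [DecidableEq α] (points : Finset α) (blocks : Finset (Finset α))
    (A B C : Finset α) : Prop :=
  A ∪ B ∪ C = points ∧ Disjoint A B ∧ Disjoint A C ∧ Disjoint B C ∧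
  IsIndep blocks A ∧ IsIndep blocks B ∧ IsIndep blocks C

theorem stmt11 {α : Type*} [DecidableEq α] (points : Finset α) (blocks : Finset (Finset α))
    (hS : IsSTS points blocks) (hv : points.card = 25)
    (A B C : Finset α) (hcol : IsColouring3 points blocks A B C)
    (hA : A.card = 11) (hB : B.card = 7) (hC : C.card = 7) :
    ∃ b ∈ blocks, ((b ∩ B).card = 2 ∧ (b ∩ A).card = 1) ∨
      ((b ∩ C).card = 2 ∧ (b ∩ A).card = 1) := by
  classical
  by_contra hneg
  push_neg at hneg
  obtain ⟨hbl, huniq⟩ := hS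
  obtain ⟨hpart, hAB, hAC, hBC, hIA, hIB, hIC⟩ := hcol
  have hBsub : B ⊆ points := by
    rw [← hpart]; intro x hx; simp [hx]
  have hCsub : C ⊆ points := by
    rw [← hpart]; intro x hx; simp [hx]
  have hcov : ∀ z ∈ points, z ∈ A ∨ z ∈ B ∨ z ∈ C := by
    intro z hz; rw [← hpart] at hz; simpa [Finset.mem_union, or_assoc] using hz
  -- key lemma, stated for X ∈ {B, C} with Y the other class
  have hkey : ∀ X Y : Finset α, X ⊆ points → (∀ z ∈ points, z ∈ A ∨ z ∈ X ∨ z ∈ Y) →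
      Disjoint A X → Disjoint X Y → IsIndep blocks X →
      (∀ b ∈ blocks, (b ∩ X).card = 2 → (b ∩ A).card ≠ 1) →
      ∀ p ∈ X.powersetCard 2, ∃ t, t ∈ blocks ∧ p ⊆ t ∧
        (t ∩ X).card = 2 ∧ (t ∩ Y).card = 1 := by
    intro X Y hXsub hcovX hAX hXY hIX hnb p hp
    rw [Finset.mem_powersetCard] at hp
    obtain ⟨hpX, hp2⟩ := hp
    obtain ⟨x, y, hxy, rfl⟩ := Finset.card_eq_two.mp hp2
    have hx : x ∈ X := hpX (by simp)
    have hy : y ∈ X := hpX (by simp)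
    obtain ⟨t, ⟨htb, hxt, hyt⟩, -⟩ := huniq x (hXsub hx) y (hXsub hy) hxy
    obtain ⟨htpts, ht3⟩ := hbl t htb
    have hpt : ({x, y} : Finset α) ⊆ t := by
      intro w hw; simp only [Finset.mem_insert, Finset.mem_singleton] at hw
      rcases hw with rfl | rfl <;> assumption
    have hsub2 : ({x, y} : Finset α) ⊆ t ∩ X := Finset.subset_inter hpt hpX
    have h2le : 2 ≤ (t ∩ X).card := hp2 ▸ Finset.card_le_card hsub2
    have hle : (t ∩ X).card ≤ 3 := ht3 ▸ Finset.card_le_card (Finset.inter_subset_left)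
    have hne3 : (t ∩ X).card ≠ 3 := by
      intro h
      have heq : t ∩ X = t := Finset.eq_of_subset_of_card_le Finset.inter_subset_left
        (by omega)
      exact hIX t htb (by rw [← heq]; exact Finset.inter_subset_right)
    have hcard2 : (t ∩ X).card = 2 := by omega
    have hdiffcard : (t \ X).card = 1 := by
      have h := Finset.card_inter_add_card_sdiff t X
      omega
    obtain ⟨z, hz⟩ := Finset.card_eq_one.mp hdiffcard
    have hzmem : z ∈ t \ X := hz ▸ Finset.mem_singleton_self z
    have hzt : z ∈ t := (Finset.mem_sdiff.mp hzmem).1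
    have hzX : z ∉ X := (Finset.mem_sdiff.mp hzmem).2
    rcases hcovX z (htpts hzt) with hzA | hzX' | hzY
    · exfalso
      have htA : t ∩ A = {z} := by
        ext w
        simp only [Finset.mem_inter, Finset.mem_singleton]
        constructor
        · rintro ⟨hwt, hwA⟩
          have hwX : w ∉ X := Finset.disjoint_left.mp hAX hwA
          have : w ∈ t \ X := Finset.mem_sdiff.mpr ⟨hwt, hwX⟩
          rw [hz] at this; simpa using this
        · rintro rfl; exact ⟨hzt, hzA⟩
      exact hnb t htb hcard2 (by rw [htA]; simp)
    · exact absurd hzX' hzX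
    · refine ⟨t, htb, hpt, hcard2, ?_⟩
      have htY : t ∩ Y = {z} := by
        ext w
        simp only [Finset.mem_inter, Finset.mem_singleton]
        constructor
        · rintro ⟨hwt, hwY⟩
          have hwX : w ∉ X := Finset.disjoint_right.mp hXY hwY
          have : w ∈ t \ X := Finset.mem_sdiff.mpr ⟨hwt, hwX⟩
          rw [hz] at this; simpa using this
        · rintro rfl; exact ⟨hzt, hzY⟩
      rw [htY]; simp
  have hnbB : ∀ b ∈ blocks, (b ∩ B).card = 2 → (b ∩ A).card ≠ 1 := by
    intro b hb h1 h2; exact (hneg b hb).1 h1 h2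
  have hnbC : ∀ b ∈ blocks, (b ∩ C).card = 2 → (b ∩ A).card ≠ 1 := by
    intro b hb h1 h2; exact (hneg b hb).2 h1 h2
  have hcovC : ∀ z ∈ points, z ∈ A ∨ z ∈ C ∨ z ∈ B := by
    intro z hz; rcases hcov z hz with h | h | h <;> tauto
  set P : Finset (Finset α) := B.powersetCard 2 ∪ C.powersetCard 2 with hPdef
  have hP : ∀ p ∈ P, ∃ t, t ∈ blocks ∧ p ⊆ t ∧
      ((t ∩ B).card = 2 ∧ (t ∩ C).card = 1 ∨ (t ∩ C).card = 2 ∧ (t ∩ B).card = 1) := by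
    intro p hp
    rcases Finset.mem_union.mp hp with h | h
    · obtain ⟨t, h1, h2, h3, h4⟩ := hkey B C hBsub hcov hAB hBC hIB hnbB p h
      exact ⟨t, h1, h2, Or.inl ⟨h3, h4⟩⟩
    · obtain ⟨t, h1, h2, h3, h4⟩ := hkey C B hCsub hcovC hAC hBC.symm hIC hnbC p h
      exact ⟨t, h1, h2, Or.inr ⟨h3, h4⟩⟩
  choose! F hFb hFsub hFcard using hP
  have hmemchar : ∀ p ∈ P, (p ⊆ B ∧ p.card = 2) ∨ (p ⊆ C ∧ p.card = 2) := by
    intro p hp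
    rcases Finset.mem_union.mp hp with h | h
    · left; exact Finset.mem_powersetCard.mp h
    · right; exact Finset.mem_powersetCard.mp h
  have hinterB : ∀ p ∈ P, p ⊆ B → p = F p ∩ B := by
    intro p hp hpB
    have hsub : p ⊆ F p ∩ B := Finset.subset_inter (hFsub p hp) hpB
    have h2 : p.card = 2 := by
      rcases hmemchar p hp with ⟨_, h⟩ | ⟨hpC, h⟩
      · exact h
      · exact h
    have hle2 : (F p ∩ B).card ≤ 2 := by
      rcases hFcard p hp with ⟨h1, _⟩ | ⟨_, h1⟩ <;> omega
    exact Finset.eq_of_subset_of_card_le hsub (by omega)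
  have hinterC : ∀ p ∈ P, p ⊆ C → p = F p ∩ C := by
    intro p hp hpC
    have hsub : p ⊆ F p ∩ C := Finset.subset_inter (hFsub p hp) hpC
    have h2 : p.card = 2 := by
      rcases hmemchar p hp with ⟨_, h⟩ | ⟨_, h⟩ <;> exact h
    have hle2 : (F p ∩ C).card ≤ 2 := by
      rcases hFcard p hp with ⟨_, h1⟩ | ⟨h1, _⟩ <;> omega
    exact Finset.eq_of_subset_of_card_le hsub (by omega)
  have hinj : Set.InjOn F P := by
    intro p hp q hq heq
    rw [Finset.mem_coe] at hp hq
    have hpc := hmemchar p hp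
    have hqc := hmemchar q hq
    rcases hpc with ⟨hpB, hp2⟩ | ⟨hpC, hp2⟩ <;> rcases hqc with ⟨hqB, hq2⟩ | ⟨hqC, hq2⟩
    · rw [hinterB p hp hpB, hinterB q hq hqB, heq]
    · exfalso
      have h1 : 2 ≤ (F p ∩ B).card := by
        have := Finset.card_le_card (Finset.subset_inter (hFsub p hp) hpB); omega
      have h2 : 2 ≤ (F p ∩ C).card := by
        have := Finset.card_le_card (Finset.subset_inter (hFsub q hq) hqC)
        rw [← heq] at this; omega
      rcases hFcard p hp with ⟨_, h⟩ | ⟨_, h⟩ <;> omega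
    · exfalso
      have h1 : 2 ≤ (F p ∩ C).card := by
        have := Finset.card_le_card (Finset.subset_inter (hFsub p hp) hpC); omega
      have h2 : 2 ≤ (F p ∩ B).card := by
        have := Finset.card_le_card (Finset.subset_inter (hFsub q hq) hqB)
        rw [← heq] at this; omega
      rcases hFcard p hp with ⟨h, _⟩ | ⟨h, _⟩ <;> omega
    · rw [hinterC p hp hpC, hinterC q hq hqC, heq]
  have hdisjP : Disjoint (B.powersetCard 2) (C.powersetCard 2) := by
    rw [Finset.disjoint_left]
    intro p hpB hpC
    rw [Finset.mem_powersetCard] at hpB hpC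
    have hsub : p ⊆ B ∩ C := Finset.subset_inter hpB.1 hpC.1
    rw [Finset.disjoint_iff_inter_eq_empty.mp hBC] at hsub
    have := Finset.card_le_card hsub
    simp [hpB.2] at this
  have hPcard : P.card = 42 := by
    rw [hPdef, Finset.card_union_of_disjoint hdisjP, Finset.card_powersetCard,
      Finset.card_powersetCard, hB, hC]
    decide
  set T : Finset (Finset α) := P.image F with hTdef
  have hTcard : T.card = 42 := by
    rw [hTdef, Finset.card_image_of_injOn hinj, hPcard]
  have hTchar : ∀ t ∈ T, t ∈ blocks ∧ ((t ∩ B) ×ˢ (t ∩ C)).card = 2 := by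
    intro t ht
    obtain ⟨p, hp, rfl⟩ := Finset.mem_image.mp ht
    refine ⟨hFb p hp, ?_⟩
    rw [Finset.card_product]
    rcases hFcard p hp with ⟨h1, h2⟩ | ⟨h1, h2⟩ <;> rw [h1, h2]
  have hsum : ∑ t ∈ T, ((t ∩ B) ×ˢ (t ∩ C)).card = 84 := by
    rw [Finset.sum_congr rfl (fun t ht => (hTchar t ht).2), Finset.sum_const, hTcard, smul_eq_mul]
  have hpair : ∀ t ∈ T, ∀ t' ∈ T, t ≠ t' →
      Disjoint ((t ∩ B) ×ˢ (t ∩ C)) ((t' ∩ B) ×ˢ (t' ∩ C)) := by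
    intro t ht t' ht' htne
    rw [Finset.disjoint_left]
    rintro ⟨x, y⟩ hm hm'
    rw [Finset.mem_product] at hm hm'
    obtain ⟨hx, hy⟩ := hm
    obtain ⟨hx', hy'⟩ := hm'
    have hxB : x ∈ B := (Finset.mem_inter.mp hx).2
    have hyC : y ∈ C := (Finset.mem_inter.mp hy).2
    have hxy : x ≠ y := fun h => Finset.disjoint_left.mp hBC hxB (h ▸ hyC)
    obtain ⟨u, -, hu⟩ := huniq x (hBsub hxB) y (hCsub hyC) hxy
    have e1 : t = u := hu t ⟨(hTchar t ht).1, (Finset.mem_inter.mp hx).1,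
      (Finset.mem_inter.mp hy).1⟩
    have e2 : t' = u := hu t' ⟨(hTchar t' ht').1, (Finset.mem_inter.mp hx').1,
      (Finset.mem_inter.mp hy').1⟩
    exact htne (e1.trans e2.symm)
  have hbiU : T.biUnion (fun t => (t ∩ B) ×ˢ (t ∩ C)) ⊆ B ×ˢ C := by
    intro w hw
    obtain ⟨t, ht, hwt⟩ := Finset.mem_biUnion.mp hw
    rw [Finset.mem_product] at hwt ⊢
    exact ⟨(Finset.mem_inter.mp hwt.1).2, (Finset.mem_inter.mp hwt.2).2⟩
  have hfinal : (84 : ℕ) ≤ 49 := by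
    calc (84 : ℕ) = ∑ t ∈ T, ((t ∩ B) ×ˢ (t ∩ C)).card := hsum.symm
      _ = (T.biUnion (fun t => (t ∩ B) ×ˢ (t ∩ C))).card :=
          (Finset.card_biUnion hpair).symm
      _ ≤ (B ×ˢ C).card := Finset.card_le_card hbiU
      _ = 49 := by rw [Finset.card_product, hB, hC]
  omega
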